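/- For all U, V, W in the free module V spanned by plane rooted trees, U ▶ (V·W) = (U▶V)·W + V·(U▶W) − V·((U▶•)·W), where • is the one-vertex plane tree. -/

import Mathlib

/-- Plane rooted trees: a root with a linearly ordered list of subtrees. -/
inductive PTree
  | node : List PTree → PTree

/-- The list of subtrees of the root. -/
def PTree.children : PTree → List PTree
  | .node cs => cs

/-- `prodAux us t` lists (with multiplicity) the trees obtained by grafting the forest `us`
along the leftmost branch of `t`: the forest is cut into consecutive blocks, the k-th block
being grafted at the k-th vertex of the leftmost branch, immediately to the left of the next
vertex of the branch, the last block becoming the children of the end of the branch. -/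
def prodAux : List PTree → PTree → List PTree
  | us, .node [] => [.node us]
  | us, .node (c :: cs) =>
    (List.range (us.length + 1)).flatMap fun j =>
      (prodAux (us.drop j) c).map fun c' => .node (us.take j ++ c' :: cs)

mutual
/-- All ways (with multiplicity) of inserting the tree `s` as a new subtree at some vertex of
`t`, at some position among the ordered children of that vertex. -/
def graftT (s : PTree) : PTree → List PTree
  | .node cs => (graftF s cs).map PTree.node

/-- All ways (with multiplicity) of inserting the tree `s` at some vertex of a forest. -/
def graftF (s : PTree) : List PTree → List (List PTree)
  | [] => [[s]]
  | c :: cs =>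
    (s :: c :: cs) :: ((graftT s c).map (· :: cs) ++ (graftF s cs).map (c :: ·))
end

/-- The free ℚ-module with basis the plane rooted trees. -/
abbrev VT := PTree →₀ ℚ

/-- The sum in `VT` of a list of trees (with multiplicity). -/
noncomputable def listToVT (l : List PTree) : VT :=
  (l.map fun t => Finsupp.single t (1 : ℚ)).sum

/-- The product of the Loday–Ronco algebra PBT in its P-basis, indexed by plane trees,
extended bilinearly. -/
noncomputable def pbtMul (x y : VT) : VT :=
  x.sum fun t1 a => y.sum fun t2 b => (a * b) • listToVT (prodAux t1.children t2)

/-- The grafting operation ▶, extended bilinearly. -/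
noncomputable def graftMul (x y : VT) : VT :=
  x.sum fun s a => y.sum fun t b => (a * b) • listToVT (graftT s t)

/-- The one-vertex plane tree • as an element of VT. -/
noncomputable def oneVertex : VT := Finsupp.single (PTree.node []) 1


lemma graftT_def (s : PTree) (cs : List PTree) :
    graftT s (.node cs) = (graftF s cs).map PTree.node := by
  rw [graftT]

@[simp] lemma graftF_nil (s : PTree) : graftF s [] = [[s]] := by rw [graftF]

lemma graftF_cons (s c : PTree) (cs : List PTree) :
    graftF s (c :: cs) =
      (s :: c :: cs) :: ((graftT s c).map (· :: cs) ++ (graftF s cs).map (c :: ·)) := by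
  rw [graftF]

lemma prodAux_nil_t (us : List PTree) : prodAux us (.node []) = [.node us] := by rw [prodAux]

lemma prodAux_cons_t (us : List PTree) (c : PTree) (cs : List PTree) :
    prodAux us (.node (c :: cs)) =
      (List.range (us.length + 1)).flatMap fun j =>
        (prodAux (us.drop j) c).map fun c' => .node (us.take j ++ c' :: cs) := by
  rw [prodAux]

lemma prodAux_nil : ∀ t : PTree, prodAux [] t = [t]
  | .node [] => by rw [prodAux]
  | .node (c :: cs) => by
    rw [prodAux]
    simp [prodAux_nil c, List.range_succ]

/-- Sum of a `VT`-valued function over a list. -/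
noncomputable def ls {α : Type*} (l : List α) (f : α → VT) : VT := (l.map f).sum

@[simp] lemma ls_nil {α : Type*} (f : α → VT) : ls [] f = 0 := rfl

@[simp] lemma ls_cons {α : Type*} (a : α) (l : List α) (f : α → VT) :
    ls (a :: l) f = f a + ls l f := by simp [ls]

lemma ls_append {α : Type*} (l m : List α) (f : α → VT) :
    ls (l ++ m) f = ls l f + ls m f := by simp [ls]

lemma ls_map {α β : Type*} (g : α → β) (l : List α) (f : β → VT) :
    ls (l.map g) f = ls l (fun a => f (g a)) := by simp [ls, List.map_map]; rfl

lemma ls_flatMap {α β : Type*} (g : α → List β) (l : List α) (f : β → VT) :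
    ls (l.flatMap g) f = ls l (fun a => ls (g a) f) := by
  induction l with
  | nil => simp
  | cons a l ih => simp [List.flatMap_cons, ls_append, ih]

lemma ls_congr {α : Type*} {l : List α} {f g : α → VT} (h : ∀ a ∈ l, f a = g a) :
    ls l f = ls l g := by
  induction l with
  | nil => simp
  | cons a l ih => simp [h a (by simp), ih fun a ha => h a (by simp [ha])]

@[simp] lemma ls_zero {α : Type*} (l : List α) : ls l (fun _ => (0 : VT)) = 0 := by
  induction l <;> simp [*]

lemma ls_add {α : Type*} (l : List α) (f g : α → VT) :
    ls l (fun a => f a + g a) = ls l f + ls l g := by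
  induction l with
  | nil => simp
  | cons a l ih => simp [ih]; abel

lemma ls_smul {α : Type*} (l : List α) (c : ℚ) (f : α → VT) :
    ls l (fun a => c • f a) = c • ls l f := by
  induction l with
  | nil => simp
  | cons a l ih => simp [ih, smul_add]

lemma ls_swap {α β : Type*} (l : List α) (m : List β) (h : α → β → VT) :
    ls l (fun a => ls m (fun b => h a b)) = ls m (fun b => ls l (fun a => h a b)) := by
  induction l with
  | nil => simp
  | cons a l ih => simp [ih, ls_add]

lemma listToVT_eq (l : List PTree) : listToVT l = ls l (fun t => Finsupp.single t 1) := rfl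
/-- Sum over all cut positions of a list. -/
noncomputable def cuts : List PTree → (List PTree → List PTree → VT) → VT
  | [], H => H [] []
  | a :: l, H => H [] (a :: l) + cuts l (fun p s => H (a :: p) s)

lemma cuts_congr : ∀ (l : List PTree) {H K : List PTree → List PTree → VT},
    (∀ p s, H p s = K p s) → cuts l H = cuts l K
  | [], H, K, h => h [] []
  | a :: l, H, K, h => by
    rw [cuts, cuts, h, cuts_congr l (fun p s => h (a :: p) s)]

lemma cuts_add : ∀ (l : List PTree) (H K : List PTree → List PTree → VT),
    cuts l (fun p s => H p s + K p s) = cuts l H + cuts l K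
  | [], H, K => rfl
  | a :: l, H, K => by
    rw [cuts, cuts, cuts, cuts_add l]
    abel

lemma ls_cuts_swap {α : Type*} (m : List α) : ∀ (l : List PTree)
    (h : α → List PTree → List PTree → VT),
    ls m (fun a => cuts l (h a)) = cuts l (fun p s => ls m (fun a => h a p s))
  | [], h => rfl
  | a :: l, h => by
    simp only [cuts]
    rw [ls_add, ls_cuts_swap m l]

lemma cuts_eq_range : ∀ (l : List PTree) (H : List PTree → List PTree → VT),
    ls (List.range (l.length + 1)) (fun j => H (l.take j) (l.drop j)) = cuts l H
  | [], H => by simp [cuts, List.range_succ]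
  | a :: l, H => by
    rw [cuts, ← cuts_eq_range l]
    rw [List.range_succ_eq_map, ls_cons, ls_map]
    simp

lemma prodAux_cons_ls (us : List PTree) (c : PTree) (cs : List PTree) (φ : PTree → VT) :
    ls (prodAux us (.node (c :: cs))) φ =
      cuts us (fun p s => ls (prodAux s c) (fun c' => φ (.node (p ++ c' :: cs)))) := by
  rw [prodAux_cons_t, ls_flatMap, ← cuts_eq_range]
  exact ls_congr fun j _ => ls_map _ _ _
lemma graftF_append (s : PTree) : ∀ (xs ys : List PTree) (f : List PTree → VT),
    ls (graftF s (xs ++ ys)) f + f (xs ++ s :: ys)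
      = ls (graftF s xs) (fun zs => f (zs ++ ys)) + ls (graftF s ys) (fun zs => f (xs ++ zs))
  | [], ys, f => by simp [graftF_nil]; abel
  | x :: xs, ys, f => by
    have ih := graftF_append s xs ys (fun zs => f (x :: zs))
    simp only [List.cons_append, graftF_cons, ls_cons, ls_append, ls_map, graftF_nil]
    rw [add_assoc, add_assoc, ih]
    abel
lemma graftF_cuts (s : PTree) : ∀ (us : List PTree) (H : List PTree → List PTree → VT),
    ls (graftF s us) (fun us' => cuts us' H)
      = cuts us (fun p q => ls (graftF s p) (fun zs => H zs q)
          + ls (graftF s q) (fun zs => H p zs))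
  | [], H => by
    simp [cuts]
    abel
  | u :: vs, H => by
    simp only [graftF_cons, ls_cons, ls_append, ls_map, cuts, ls_add, cuts_add, graftF_nil,
      ls_nil]
    rw [graftF_cuts s vs]
    rw [ls_cuts_swap]
    simp only [cuts_add, ls_add]
    abel
lemma core_aux (s : PTree) : ∀ (n : ℕ) (T : PTree), sizeOf T ≤ n →
    ∀ (us : List PTree) (φ : PTree → VT),
    ls (prodAux us T) (fun t => ls (graftT s t) φ)
      + ls (prodAux [s] T) (fun t => ls (prodAux us t) φ)
    = ls (graftF s us) (fun us' => ls (prodAux us' T) φ)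
      + ls (graftT s T) (fun t => ls (prodAux us t) φ) := by
  intro n
  induction n with
  | zero =>
    intro T hT
    cases T with
    | node l => simp at hT
  | succ n ih =>
    intro T hT us φ
    obtain ⟨l⟩ := T
    cases l with
    | nil =>
      simp only [prodAux_nil_t, ls_cons, ls_nil, graftT_def, graftF_nil, ls_map, add_zero]
    | cons c cs =>
      have hc : sizeOf c ≤ n := by
        simp at hT
        omega
      -- Term A
      have hA : ls (prodAux us (.node (c :: cs))) (fun t => ls (graftT s t) φ)
          = cuts us (fun p q => ls (prodAux q c) (fun c' =>
              ls (graftF s p) (fun zs => φ (.node (zs ++ c' :: cs)))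
              + ls (graftT s c') (fun g => φ (.node (p ++ g :: cs)))
              + ls (graftF s cs) (fun zs => φ (.node (p ++ c' :: zs))))) := by
        rw [prodAux_cons_ls]
        refine cuts_congr us fun p q => ls_congr fun c' _ => ?_
        rw [graftT_def, ls_map]
        have h := graftF_append s p (c' :: cs) (fun L => φ (.node L))
        rw [graftF_cons, ls_cons, ls_append, ls_map, ls_map] at h
        apply add_right_cancel (b := φ (.node (p ++ s :: c' :: cs)))
        rw [h]
        abel
      -- Term B
      have hB : ls (prodAux [s] (.node (c :: cs))) (fun t => ls (prodAux us t) φ)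
          = cuts us (fun p q => ls (prodAux [s] c) (fun c' =>
              ls (prodAux q c') (fun e => φ (.node (p ++ e :: cs)))))
            + ls (prodAux us (.node (s :: c :: cs))) φ := by
        rw [prodAux_cons_ls]
        simp only [cuts, prodAux_nil, ls_cons, ls_nil, List.nil_append, List.cons_append,
          add_zero]
        congr 1
        rw [← ls_cuts_swap]
        refine ls_congr fun c' _ => ?_
        rw [prodAux_cons_ls]
      -- Term D
      have hD : ls (graftT s (.node (c :: cs))) (fun t => ls (prodAux us t) φ)
          = ls (prodAux us (.node (s :: c :: cs))) φ
            + cuts us (fun p q => ls (graftT s c) (fun g =>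
                ls (prodAux q g) (fun e => φ (.node (p ++ e :: cs)))))
            + cuts us (fun p q => ls (prodAux q c) (fun c' =>
                ls (graftF s cs) (fun zs => φ (.node (p ++ c' :: zs))))) := by
        rw [graftT_def, ls_map, graftF_cons, ls_cons, ls_append, ls_map, ls_map]
        rw [add_assoc]
        congr 1
        congr 1
        · rw [← ls_cuts_swap]
          refine ls_congr fun g _ => ?_
          rw [prodAux_cons_ls]
        · rw [show (fun zs : List PTree => ls (prodAux us (PTree.node (c :: zs))) φ)
              = (fun zs : List PTree => cuts us fun p q => ls (prodAux q c)
                  fun c' => φ (.node (p ++ c' :: zs))) from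
              funext fun zs => prodAux_cons_ls us c zs φ]
          rw [ls_cuts_swap]
          exact cuts_congr us fun p q => ls_swap _ _ _
      -- Term C
      have hC : ls (graftF s us) (fun us' => ls (prodAux us' (.node (c :: cs))) φ)
          = cuts us (fun p q =>
              ls (graftF s p) (fun zs => ls (prodAux q c) (fun c' => φ (.node (zs ++ c' :: cs))))
              + ls (graftF s q) (fun zs =>
                  ls (prodAux zs c) (fun c' => φ (.node (p ++ c' :: cs))))) := by
        rw [show (fun us' => ls (prodAux us' (PTree.node (c :: cs))) φ)
            = (fun us' => cuts us' fun p q => ls (prodAux q c)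
                fun c' => φ (.node (p ++ c' :: cs))) from
            funext fun us' => prodAux_cons_ls us' c cs φ]
        exact graftF_cuts s us _
      -- the inductive hypothesis, summed over cuts
      have key : cuts us (fun p q => ls (prodAux q c) (fun c' =>
              ls (graftT s c') (fun g => φ (.node (p ++ g :: cs)))))
            + cuts us (fun p q => ls (prodAux [s] c) (fun c' =>
              ls (prodAux q c') (fun e => φ (.node (p ++ e :: cs)))))
          = cuts us (fun p q => ls (graftF s q) (fun zs =>
              ls (prodAux zs c) (fun c' => φ (.node (p ++ c' :: cs)))))
            + cuts us (fun p q => ls (graftT s c) (fun g =>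
              ls (prodAux q g) (fun e => φ (.node (p ++ e :: cs))))) := by
        rw [← cuts_add, ← cuts_add]
        exact cuts_congr us fun p q => ih c hc q (fun t => φ (.node (p ++ t :: cs)))
      have hswap : cuts us (fun p q => ls (prodAux q c) (fun c' =>
              ls (graftF s p) (fun zs => φ (.node (zs ++ c' :: cs)))))
          = cuts us (fun p q =>
              ls (graftF s p) (fun zs => ls (prodAux q c)
                (fun c' => φ (.node (zs ++ c' :: cs))))) :=
        cuts_congr us fun p q => ls_swap _ _ _
      rw [hA, hB, hC, hD]
      simp only [ls_add, cuts_add]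
      rw [hswap]
      rw [← sub_eq_zero]
      rw [← sub_eq_zero] at key
      rw [← key]
      abel
section bl
variable (v : PTree → PTree → List PTree)

noncomputable def bl (x y : VT) : VT :=
  x.sum fun t1 a => y.sum fun t2 b => (a * b) • listToVT (v t1 t2)

lemma pbt_eq (x y : VT) : pbtMul x y = bl (fun t1 t2 => prodAux t1.children t2) x y := rfl

lemma graft_eq (x y : VT) : graftMul x y = bl graftT x y := rfl

@[simp] lemma bl_zero_left (y : VT) : bl v 0 y = 0 := by simp [bl]

@[simp] lemma bl_zero_right (x : VT) : bl v x 0 = 0 := by simp [bl]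

lemma bl_add_left (x x' y : VT) : bl v (x + x') y = bl v x y + bl v x' y := by
  unfold bl
  apply Finsupp.sum_add_index' <;> intros <;> simp [add_mul, add_smul, Finsupp.sum_add]

lemma bl_add_right (x y y' : VT) : bl v x (y + y') = bl v x y + bl v x y' := by
  unfold bl
  rw [← Finsupp.sum_add]
  refine Finsupp.sum_congr fun t1 _ => ?_
  apply Finsupp.sum_add_index' <;> intros <;> simp [mul_add, add_smul]

lemma bl_single_single (t1 t2 : PTree) (a b : ℚ) :
    bl v (Finsupp.single t1 a) (Finsupp.single t2 b) = (a * b) • listToVT (v t1 t2) := by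
  unfold bl
  rw [Finsupp.sum_single_index, Finsupp.sum_single_index]
  · simp
  · simp [Finsupp.sum_single_index]

lemma bl_smul_left (c : ℚ) (x y : VT) : bl v (c • x) y = c • bl v x y := by
  unfold bl
  rw [Finsupp.sum_smul_index', Finsupp.smul_sum]
  · refine Finsupp.sum_congr fun t1 a => ?_
    rw [Finsupp.smul_sum]
    refine Finsupp.sum_congr fun t2 b => ?_
    simp [smul_smul, mul_assoc]
  · intro t1
    simp

lemma bl_smul_right (c : ℚ) (x y : VT) : bl v x (c • y) = c • bl v x y := by
  unfold bl
  rw [Finsupp.smul_sum]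
  refine Finsupp.sum_congr fun t1 a => ?_
  rw [Finsupp.sum_smul_index', Finsupp.smul_sum]
  · refine Finsupp.sum_congr fun t2 b => ?_
    simp [smul_smul]
    ring_nf
  · intro t2
    simp

lemma bl_listToVT_left (l : List PTree) (y : VT) :
    bl v (listToVT l) y = ls l (fun t => bl v (Finsupp.single t 1) y) := by
  induction l with
  | nil => simp [listToVT]
  | cons t l ih =>
    have : listToVT (t :: l) = Finsupp.single t 1 + listToVT l := by simp [listToVT]
    rw [this, bl_add_left, ih, ls_cons]

lemma bl_listToVT_right (l : List PTree) (x : VT) :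
    bl v x (listToVT l) = ls l (fun t => bl v x (Finsupp.single t 1)) := by
  induction l with
  | nil => simp [listToVT]
  | cons t l ih =>
    have : listToVT (t :: l) = Finsupp.single t 1 + listToVT l := by simp [listToVT]
    rw [this, bl_add_right, ih, ls_cons]

end bl
@[simp] lemma children_node (cs : List PTree) : (PTree.node cs).children = cs := rfl

lemma key_single (s t1 t2 : PTree) (u a b : ℚ) :
    graftMul (Finsupp.single s u) (pbtMul (Finsupp.single t1 a) (Finsupp.single t2 b))
      = pbtMul (graftMul (Finsupp.single s u) (Finsupp.single t1 a)) (Finsupp.single t2 b)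
        + pbtMul (Finsupp.single t1 a) (graftMul (Finsupp.single s u) (Finsupp.single t2 b))
        - pbtMul (Finsupp.single t1 a)
            (pbtMul (graftMul (Finsupp.single s u) oneVertex) (Finsupp.single t2 b)) := by
  have hg : graftT s (PTree.node []) = [PTree.node [s]] := by
    rw [graftT_def, graftF_nil]
    rfl
  have hcore := core_aux s (sizeOf t2) t2 le_rfl t1.children (fun t => Finsupp.single t 1)
  simp only [← listToVT_eq] at hcore
  have ht1 : ls (graftF s t1.children) (fun us' => listToVT (prodAux us' t2))
      = ls (graftT s t1) (fun g => listToVT (prodAux g.children t2)) := by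
    obtain ⟨cs⟩ := t1
    rw [graftT_def, ls_map]
    rfl
  rw [ht1] at hcore
  simp only [graft_eq, pbt_eq, oneVertex, bl_single_single, bl_smul_left, bl_smul_right,
    bl_listToVT_left, bl_listToVT_right, ls_smul, smul_smul, one_mul, mul_one, ls_cons, ls_nil,
    add_zero, hg, children_node]
  ring_nf
  rw [eq_sub_iff_add_eq, ← smul_add, ← smul_add]
  rw [hcore]
theorem stmt16 : ∀ U V W : VT,
    graftMul U (pbtMul V W)
      = pbtMul (graftMul U V) W + pbtMul V (graftMul U W)
        - pbtMul V (pbtMul (graftMul U oneVertex) W) := by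
  intro U V W
  induction U using Finsupp.induction_linear with
  | zero => simp [graft_eq, pbt_eq]
  | add x y hx hy =>
    simp only [graft_eq, pbt_eq, bl_add_left, bl_add_right] at hx hy ⊢
    rw [hx, hy]
    abel
  | single s u =>
    induction V using Finsupp.induction_linear with
    | zero => simp [graft_eq, pbt_eq]
    | add x y hx hy =>
      simp only [graft_eq, pbt_eq, bl_add_left, bl_add_right] at hx hy ⊢
      rw [hx, hy]
      abel
    | single t1 a =>
      induction W using Finsupp.induction_linear with
      | zero => simp [graft_eq, pbt_eq]
      | add x y hx hy =>
        simp only [graft_eq, pbt_eq, bl_add_left, bl_add_right] at hx hy ⊢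
        rw [hx, hy]
        abel
      | single t2 b => exact key_single s t1 t2 u a b
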